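/- Let X be a real Banach space whose dual space X* is strictly convex. Let P : X → X be a contractive projection (P linear, P ∘ P = P, ‖P(x)‖ ≤ ‖x‖ for all x). If x belongs to the range of P and f ∈ X* satisfies f(x) = ‖x‖² = ‖f‖², then f ∘ P = f, i.e. f belongs to the range of the adjoint projection P*. -/

import Mathlib

/-- Let `X` be a real Banach space with strictly convex dual and `P` a contractive
projection on `X`. If `x` is in the range of `P` and `f` is a normalized duality
functional for `x` (i.e. `f(x) = ‖x‖² = ‖f‖²`), then `f ∘ P = f`. -/
theorem duality_functional_fixed_by_adjoint_projection
    {X : Type*} [NormedAddCommGroup X] [NormedSpace ℝ X] [CompleteSpace X]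
    [StrictConvexSpace ℝ (StrongDual ℝ X)]
    (P : X →L[ℝ] X) (hcontr : ∀ z, ‖P z‖ ≤ ‖z‖) (hproj : ∀ z, P (P z) = P z)
    (x : X) (hx : x ∈ Set.range P)
    (f : StrongDual ℝ X) (hfx : f x = ‖x‖ ^ 2) (hf : ‖f‖ = ‖x‖) :
    ∀ z, f (P z) = f z := by
  obtain ⟨y, rfl⟩ := hx
  have hPx : P (P y) = P y := hproj y
  set x := P y with hxdef
  by_cases hx0 : x = 0
  · intro z
    have hf0 : f = 0 := by
      have : ‖f‖ = 0 := by rw [hf, hx0, norm_zero]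
      exact norm_eq_zero.mp this
    simp [hf0]
  have hxn : (0:ℝ) < ‖x‖ := norm_pos_iff.mpr hx0
  -- g = f ∘ P
  set g : StrongDual ℝ X := f.comp P with hg
  have hgx : g x = ‖x‖ ^ 2 := by
    simp only [hg, ContinuousLinearMap.comp_apply, hPx]
    exact hfx
  have hgle : ‖g‖ ≤ ‖f‖ := by
    refine ContinuousLinearMap.opNorm_le_bound _ (norm_nonneg f) fun z => ?_
    calc ‖g z‖ = ‖f (P z)‖ := rfl
      _ ≤ ‖f‖ * ‖P z‖ := f.le_opNorm _
      _ ≤ ‖f‖ * ‖z‖ := by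
          exact mul_le_mul_of_nonneg_left (hcontr z) (norm_nonneg f)
  have hgge : ‖x‖ ≤ ‖g‖ := by
    have h := g.le_opNorm x
    rw [hgx] at h
    rw [Real.norm_of_nonneg (by positivity)] at h
    nlinarith
  have hgn : ‖g‖ = ‖f‖ := le_antisymm hgle (hf ▸ hgge)
  have hsum : ‖f + g‖ = ‖f‖ + ‖g‖ := by
    apply le_antisymm (norm_add_le _ _)
    have h := (f + g).le_opNorm x
    have hval : (f + g) x = 2 * ‖x‖ ^ 2 := by
      simp [hfx, hgx]; ring
    rw [hval] at h
    rw [Real.norm_of_nonneg (by positivity)] at h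
    rw [hgn, hf]
    nlinarith
  have : f = g := eq_of_norm_eq_of_norm_add_eq hgn.symm hsum
  intro z
  conv_rhs => rw [this]
  rfl
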